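/- Fix labels y_1,...,y_n ∈ {1,...,K} with class counts n_k = #{i : y_i = k} ≥ 1 for every k, and let X_1,...,X_n be independent random vectors in ℝ^d where X_i has density f*_{y_i}. Let Λ = ((λ_b),(f_b)) be a mixing measure with λ_b f_b(x) > 0 for all x and b. For b,k ∈ {1,...,K} let μ_{b,k} = E[log(λ_b f_b(X)) ] for X with density f*_k, assume the centered log-moment-generating function β_{b,k}(s) = log E[exp(s(log(λ_b f_b(X)) − μ_{b,k}))] (X having density f*_k) is finite for all s ∈ ℝ, and set β*_{b,k}(t) = sup_{s∈ℝ}(st − β_{b,k}(s)). Define M(π) = (1/n) Σ_{i=1}^n μ_{π(y_i), y_i} for each permutation π of {1,...,K}, and the gap Δ = M(id) − max_{π ≠ id} M(π). If Δ > 0, then the probability that the identity permutation is the unique maximizer over permutations π of the log-likelihood ℓ_n(π) = (1/n) Σ_{i=1}^n log(λ_{π(y_i)} f_{π(y_i)}(X_i)) is at least 1 − 2K² exp( −(min_k n_k) · inf_{b,k} min( β*_{b,k}(Δ/3), β*_{b,k}(−Δ/3) ) ). -/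

import Mathlib

open MeasureTheory ProbabilityTheory
open scoped ENNReal NNReal

private lemma aux_sup_bound (p m : ℝ) (hp : 0 ≤ p) (hm : 0 < m) (g : ℝ → ℝ)
    (h : ∀ s : ℝ, p ≤ Real.exp (-(m * g s))) :
    p ≤ Real.exp (-(m * ⨆ s : ℝ, g s)) := by
  rcases eq_or_lt_of_le hp with h0 | hp0
  · exact (le_of_eq h0.symm).trans (Real.exp_pos _).le
  have hb : ∀ s, g s ≤ -Real.log p / m := by
    intro s
    have h1 : Real.log p ≤ -(m * g s) := by
      have := Real.log_le_log hp0 (h s)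
      rwa [Real.log_exp] at this
    rw [le_div_iff₀ hm]
    nlinarith
  have hsup : (⨆ s : ℝ, g s) ≤ -Real.log p / m := ciSup_le hb
  calc p = Real.exp (Real.log p) := (Real.exp_log hp0).symm
    _ ≤ Real.exp (-(m * ⨆ s : ℝ, g s)) := by
        apply Real.exp_le_exp.mpr
        rw [le_div_iff₀ hm] at hsup
        nlinarith


/-- **Theorem 1 (MLE recovery of the permutation), conditional on labels.**
Fixed labels `y i ∈ Fin K` with every class count `n_k ≥ 1`; independent samples
`X i` where `X i` has density `fstar (y i)` on `ℝ^d`.  Given a mixing measure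
`(lam, f)` with `lam b * f b x > 0` everywhere, with per-class means `μmat b k`,
centered log-mgf `β b k` (assumed finite) and its Fenchel–Legendre dual `βstar b k`,
if the population log-likelihood gap `Δ` between the identity permutation and the
best other permutation is positive, then the identity is the unique maximizer of the
empirical log-likelihood with probability at least
`1 - 2K² exp(-(min_k n_k) · inf_{b,k} min(β*_{b,k}(Δ/3), β*_{b,k}(-Δ/3)))`. -/
theorem mle_permutation_recovery
    {Ω : Type*} [MeasurableSpace Ω] (P : Measure Ω) [IsProbabilityMeasure P]
    (d K n : ℕ) (hK : 2 ≤ K)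
    -- fixed labels with all class counts at least one
    (y : Fin n → Fin K)
    (hcount : ∀ k : Fin K, 1 ≤ (Finset.univ.filter (fun i => y i = k)).card)
    -- true class-conditional densities on ℝ^d
    (fstar : Fin K → (Fin d → ℝ) → ℝ)
    (hfstar_meas : ∀ k, Measurable (fstar k))
    (hfstar_nonneg : ∀ k x, 0 ≤ fstar k x)
    (hfstar_int : ∀ k, ∫ x, fstar k x = 1)
    -- independent samples, X i has density fstar (y i)
    (X : Fin n → Ω → (Fin d → ℝ))
    (hX_meas : ∀ i, Measurable (X i))
    (hX_indep : iIndepFun X P)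
    (hX_law : ∀ i, Measure.map (X i) P
      = volume.withDensity (fun x => ENNReal.ofReal (fstar (y i) x)))
    -- the mixing measure Λ = ((lam b), (f b))
    (lam : Fin K → ℝ) (f : Fin K → (Fin d → ℝ) → ℝ)
    (hlam_pos : ∀ b, 0 < lam b) (hlam_sum : ∑ b, lam b = 1)
    (hf_meas : ∀ b, Measurable (f b))
    (hf_nonneg : ∀ b x, 0 ≤ f b x) (hf_int : ∀ b, ∫ x, f b x = 1)
    (hpos : ∀ b x, 0 < lam b * f b x)
    -- per-class expectations μ_{b,k} = E_{X ~ fstar k}[log(lam b * f b X)]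
    (μmat : Fin K → Fin K → ℝ)
    (hμ_int : ∀ b k, Integrable (fun x => Real.log (lam b * f b x) * fstar k x))
    (hμ : ∀ b k, μmat b k = ∫ x, Real.log (lam b * f b x) * fstar k x)
    -- centered log moment generating functions, assumed finite for all s
    (β : Fin K → Fin K → ℝ → ℝ)
    (hβ_fin : ∀ b k s, Integrable
      (fun x => Real.exp (s * (Real.log (lam b * f b x) - μmat b k)) * fstar k x))
    (hβ : ∀ b k s, β b k s
      = Real.log (∫ x, Real.exp (s * (Real.log (lam b * f b x) - μmat b k)) * fstar k x))
    -- Fenchel–Legendre duals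
    (βstar : Fin K → Fin K → ℝ → ℝ)
    (hβstar : ∀ b k t, βstar b k t = ⨆ s : ℝ, (s * t - β b k s))
    -- expected log-likelihoods and the gap Δ
    (M : Equiv.Perm (Fin K) → ℝ)
    (hM : ∀ π, M π = (1 / (n : ℝ)) * ∑ i, μmat (π (y i)) (y i))
    (Δ : ℝ)
    (hΔ : Δ = M 1 - ⨆ π : {π : Equiv.Perm (Fin K) // π ≠ 1}, M π.1)
    (hΔpos : 0 < Δ) :
    1 - 2 * (K : ℝ) ^ 2 *
        Real.exp (-((⨅ k : Fin K, ((Finset.univ.filter (fun i => y i = k)).card : ℝ)) *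
          ⨅ bk : Fin K × Fin K, min (βstar bk.1 bk.2 (Δ / 3)) (βstar bk.1 bk.2 (-(Δ / 3)))))
      ≤ (P {ω | ∀ π : Equiv.Perm (Fin K), π ≠ 1 →
          (1 / (n : ℝ)) * ∑ i, Real.log (lam (π (y i)) * f (π (y i)) (X i ω))
            < (1 / (n : ℝ)) * ∑ i, Real.log (lam (y i) * f (y i) (X i ω))}).toReal := by
  classical
  have hK0 : 0 < K := lt_of_lt_of_le two_pos hK
  haveI : NeZero K := ⟨hK0.ne'⟩
  haveI hne1 : Nonempty (Fin K) := ⟨⟨0, hK0⟩⟩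
  haveI hne2 : Nonempty (Fin K × Fin K) := ⟨(⟨0, hK0⟩, ⟨0, hK0⟩)⟩
  set T : Fin K → Finset (Fin n) := fun k => Finset.univ.filter (fun i => y i = k) with hT
  have hnk_pos : ∀ k, 0 < ((T k).card : ℝ) := by
    intro k
    have := hcount k
    rw [hT]
    exact_mod_cast Nat.lt_of_lt_of_le Nat.zero_lt_one this
  have hn_sum : ∑ k, ((T k).card : ℝ) = (n : ℝ) := by
    rw [← Nat.cast_sum]
    congr 1
    rw [hT]
    exact (Finset.card_eq_sum_card_fiberwise (f := y) (t := Finset.univ)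
      (fun i _ => Finset.mem_univ _)).symm.trans (by simp)
  have hn_pos : 0 < (n : ℝ) := by
    rw [← hn_sum]
    exact Finset.sum_pos (fun k _ => hnk_pos k) ⟨⟨0, hK0⟩, Finset.mem_univ _⟩
  set g : Fin K → Fin K → (Fin d → ℝ) → ℝ :=
    fun b k x => Real.log (lam b * f b x) - μmat b k with hg
  have hg_meas : ∀ b k, Measurable (g b k) := by
    intro b k
    rw [hg]
    exact (Real.measurable_log.comp ((hf_meas b).const_mul (lam b))).sub measurable_const
  set Z : Fin K → Fin K → Fin n → Ω → ℝ := fun b k i ω => g b k (X i ω) with hZ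
  have hZ_meas : ∀ b k i, Measurable (Z b k i) := fun b k i => (hg_meas b k).comp (hX_meas i)
  -- transfer of integrals and integrability from P to densities
  have key : ∀ (i : Fin n) (φ : (Fin d → ℝ) → ℝ), Measurable φ →
      Integrable (fun x => φ x * fstar (y i) x) volume →
      Integrable (fun ω => φ (X i ω)) P ∧
        ∫ ω, φ (X i ω) ∂P = ∫ x, φ x * fstar (y i) x := by
    intro i φ hφ hint
    have hmap : Measure.map (X i) P
        = volume.withDensity (fun x => ((fstar (y i) x).toNNReal : ℝ≥0∞)) := hX_law i
    have hmeas_d : Measurable fun x => ENNReal.ofReal (fstar (y i) x) :=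
      (hfstar_meas (y i)).ennreal_ofReal
    constructor
    · have h1 : Integrable φ (Measure.map (X i) P) := by
        rw [hX_law i, integrable_withDensity_iff hmeas_d
          (ae_of_all _ fun x => ENNReal.ofReal_lt_top)]
        refine hint.congr (ae_of_all _ fun x => ?_)
        simp [ENNReal.toReal_ofReal (hfstar_nonneg _ x)]
      exact (integrable_map_measure hφ.aestronglyMeasurable (hX_meas i).aemeasurable).mp h1
    · calc ∫ ω, φ (X i ω) ∂P
          = ∫ x, φ x ∂(Measure.map (X i) P) :=
            (integral_map (hX_meas i).aemeasurable hφ.aestronglyMeasurable).symm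
        _ = ∫ x, φ x ∂(volume.withDensity fun x => ((fstar (y i) x).toNNReal : ℝ≥0∞)) := by
            rw [hmap]
        _ = ∫ x, (fstar (y i) x).toNNReal • φ x :=
            integral_withDensity_eq_integral_smul (hfstar_meas (y i)).real_toNNReal φ
        _ = ∫ x, φ x * fstar (y i) x := by
            congr 1
            funext x
            simp [NNReal.smul_def, smul_eq_mul,
              Real.coe_toNNReal _ (hfstar_nonneg (y i) x), mul_comm]
  have hfstar_integrable : ∀ k, Integrable (fstar k) volume := by
    intro k
    by_contra h
    have h1 := hfstar_int k
    rw [integral_undef h] at h1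
    exact zero_ne_one h1
  have hgf_expand : ∀ b k, (fun x => g b k x * fstar k x)
      = fun x => Real.log (lam b * f b x) * fstar k x - μmat b k * fstar k x := by
    intro b k
    funext x
    simp only [hg]
    ring
  have hgf_int : ∀ b k, Integrable (fun x => g b k x * fstar k x) volume := by
    intro b k
    rw [hgf_expand]
    exact (hμ_int b k).sub ((hfstar_integrable k).const_mul (μmat b k))
  have hgf_zero : ∀ b k, ∫ x, g b k x * fstar k x = 0 := by
    intro b k
    rw [hgf_expand]
    rw [integral_sub (hμ_int b k) ((hfstar_integrable k).const_mul (μmat b k)),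
      integral_const_mul, hfstar_int, ← hμ]
    ring
  have hexp_fin : ∀ b k s, Integrable (fun x => Real.exp (s * g b k x) * fstar k x) volume := by
    intro b k s
    simpa only [hg] using hβ_fin b k s
  have hβ' : ∀ b k s, β b k s = Real.log (∫ x, Real.exp (s * g b k x) * fstar k x) := by
    intro b k s
    simpa only [hg] using hβ b k s
  have hI_one : ∀ b k s, 1 ≤ ∫ x, Real.exp (s * g b k x) * fstar k x := by
    intro b k s
    have h2 : (fun x => (1 + s * g b k x) * fstar k x)
        = fun x => fstar k x + s * (g b k x * fstar k x) := by
      funext x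
      ring
    have hint1 : Integrable (fun x => (1 + s * g b k x) * fstar k x) volume := by
      rw [h2]
      exact (hfstar_integrable k).add ((hgf_int b k).const_mul s)
    have hle : ∫ x, (1 + s * g b k x) * fstar k x
        ≤ ∫ x, Real.exp (s * g b k x) * fstar k x := by
      apply integral_mono hint1 (hexp_fin b k s)
      intro x
      dsimp only
      have h3 := Real.add_one_le_exp (s * g b k x)
      have h4 := hfstar_nonneg k x
      nlinarith
    have heq : ∫ x, (1 + s * g b k x) * fstar k x = 1 := by
      rw [h2, integral_add (hfstar_integrable k) ((hgf_int b k).const_mul s),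
        integral_const_mul, hfstar_int, hgf_zero]
      ring
    linarith
  have hβ_nonneg : ∀ b k s, 0 ≤ β b k s := fun b k s =>
    (hβ' b k s) ▸ Real.log_nonneg (hI_one b k s)
  have hexpβ : ∀ b k s, Real.exp (β b k s) = ∫ x, Real.exp (s * g b k x) * fstar k x :=
    fun b k s => (hβ' b k s) ▸ Real.exp_log (lt_of_lt_of_le one_pos (hI_one b k s))
  have hβ0 : ∀ b k, β b k 0 = 0 := by
    intro b k
    rw [hβ' b k 0]
    simp [hfstar_int k]
  have hβstar_nonneg : ∀ b k t, 0 ≤ βstar b k t := by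
    intro b k t
    rw [hβstar]
    by_cases hbdd : BddAbove (Set.range fun s : ℝ => s * t - β b k s)
    · have h0 : (0 : ℝ) * t - β b k 0 ≤ ⨆ s : ℝ, (s * t - β b k s) := le_ciSup hbdd 0
      rw [hβ0 b k] at h0
      simpa using h0
    · rw [Real.iSup_of_not_bddAbove hbdd]
  -- mgf computations
  have hZint : ∀ b k s (i : Fin n), y i = k →
      Integrable (fun ω => Real.exp (s * Z b k i ω)) P := by
    intro b k s i hik
    have := (key i (fun x => Real.exp (s * g b k x))
      (((hg_meas b k).const_mul s).exp) (hik ▸ hexp_fin b k s)).1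
    simpa [hZ] using this
  have hmgfZ : ∀ b k s (i : Fin n), y i = k → mgf (Z b k i) P s = Real.exp (β b k s) := by
    intro b k s i hik
    have := (key i (fun x => Real.exp (s * g b k x))
      (((hg_meas b k).const_mul s).exp) (hik ▸ hexp_fin b k s)).2
    rw [mgf]
    rw [hexpβ b k s]
    rw [← hik] at this ⊢
    exact this
  have hindepZ : ∀ b k, iIndepFun (fun i => Z b k i) P := by
    intro b k
    have := hX_indep.comp (fun _ => g b k) (fun _ => hg_meas b k)
    exact this
  have hmemT : ∀ k (i : Fin n), i ∈ T k → y i = k := by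
    intro k i hi
    rw [hT] at hi
    exact (Finset.mem_filter.mp hi).2
  have hSint : ∀ b k s, Integrable (fun ω => Real.exp (s * (∑ i ∈ T k, Z b k i) ω)) P := by
    intro b k s
    exact iIndepFun.integrable_exp_mul_sum (hindepZ b k) (fun i => hZ_meas b k i)
      (fun i hi => hZint b k s i (hmemT k i hi))
  have hmgfS : ∀ b k s,
      mgf (∑ i ∈ T k, Z b k i) P s = Real.exp (((T k).card : ℝ) * β b k s) := by
    intro b k s
    rw [iIndepFun.mgf_sum (hindepZ b k) (fun i => hZ_meas b k i) (T k)]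
    rw [Finset.prod_congr rfl (fun i hi => hmgfZ b k s i (hmemT k i hi))]
    rw [Finset.prod_const, ← Real.exp_nat_mul]
  have hp_le_one : ∀ A : Set Ω, (P A).toReal ≤ 1 := by
    intro A
    have : P A ≤ 1 := prob_le_one
    simpa using ENNReal.toReal_mono ENNReal.one_ne_top this
  -- Chernoff bounds
  have chern_up : ∀ b k (t : ℝ), 0 < t →
      (P {ω | ((T k).card : ℝ) * t ≤ (∑ i ∈ T k, Z b k i) ω}).toReal
        ≤ Real.exp (-(((T k).card : ℝ) * βstar b k t)) := by
    intro b k t ht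
    rw [hβstar]
    apply aux_sup_bound _ _ ENNReal.toReal_nonneg (hnk_pos k)
    intro s
    rcases le_or_gt 0 s with hs | hs
    · have hch := measure_ge_le_exp_mul_mgf (μ := P) (X := ∑ i ∈ T k, Z b k i)
        (((T k).card : ℝ) * t) hs (hSint b k s)
      rw [hmgfS b k s] at hch
      refine hch.trans (le_of_eq ?_)
      rw [← Real.exp_add]
      congr 1
      ring
    · refine (hp_le_one _).trans ?_
      rw [show (1 : ℝ) = Real.exp 0 from (Real.exp_zero).symm]
      apply Real.exp_le_exp.mpr
      have hβn := hβ_nonneg b k s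
      have hu : s * t - β b k s ≤ 0 := by nlinarith [mul_pos (neg_pos.mpr hs) ht]
      nlinarith [mul_nonneg (hnk_pos k).le (neg_nonneg.mpr hu)]
  have chern_lo : ∀ b k (t : ℝ), t < 0 →
      (P {ω | (∑ i ∈ T k, Z b k i) ω ≤ ((T k).card : ℝ) * t}).toReal
        ≤ Real.exp (-(((T k).card : ℝ) * βstar b k t)) := by
    intro b k t ht
    rw [hβstar]
    apply aux_sup_bound _ _ ENNReal.toReal_nonneg (hnk_pos k)
    intro s
    rcases le_or_gt s 0 with hs | hs
    · have hch := measure_le_le_exp_mul_mgf (μ := P) (X := ∑ i ∈ T k, Z b k i)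
        (((T k).card : ℝ) * t) hs (hSint b k s)
      rw [hmgfS b k s] at hch
      refine hch.trans (le_of_eq ?_)
      rw [← Real.exp_add]
      congr 1
      ring
    · refine (hp_le_one _).trans ?_
      rw [show (1 : ℝ) = Real.exp 0 from (Real.exp_zero).symm]
      apply Real.exp_le_exp.mpr
      have hβn := hβ_nonneg b k s
      have hu : s * t - β b k s ≤ 0 := by nlinarith [mul_pos hs (neg_pos.mpr ht)]
      nlinarith [mul_nonneg (hnk_pos k).le (neg_nonneg.mpr hu)]
  -- the combined exponent
  set E : ℝ := (⨅ k : Fin K, ((T k).card : ℝ)) *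
      ⨅ bk : Fin K × Fin K, min (βstar bk.1 bk.2 (Δ / 3)) (βstar bk.1 bk.2 (-(Δ / 3))) with hE
  have hE_le : ∀ b k (t : ℝ), (t = Δ / 3 ∨ t = -(Δ / 3)) →
      E ≤ ((T k).card : ℝ) * βstar b k t := by
    intro b k t ht
    have hbdd1 : BddBelow (Set.range fun k : Fin K => ((T k).card : ℝ)) :=
      Set.Finite.bddBelow (Set.finite_range _)
    have hbdd2 : BddBelow (Set.range fun bk : Fin K × Fin K =>
        min (βstar bk.1 bk.2 (Δ / 3)) (βstar bk.1 bk.2 (-(Δ / 3)))) :=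
      Set.Finite.bddBelow (Set.finite_range _)
    have hm0 : (⨅ k : Fin K, ((T k).card : ℝ)) ≤ ((T k).card : ℝ) := ciInf_le hbdd1 k
    have hc0 : (⨅ bk : Fin K × Fin K,
          min (βstar bk.1 bk.2 (Δ / 3)) (βstar bk.1 bk.2 (-(Δ / 3))))
        ≤ min (βstar b k (Δ / 3)) (βstar b k (-(Δ / 3))) := ciInf_le hbdd2 (b, k)
    have hc0n : 0 ≤ ⨅ bk : Fin K × Fin K,
        min (βstar bk.1 bk.2 (Δ / 3)) (βstar bk.1 bk.2 (-(Δ / 3))) :=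
      le_ciInf fun bk => le_min (hβstar_nonneg _ _ _) (hβstar_nonneg _ _ _)
    have hmin : min (βstar b k (Δ / 3)) (βstar b k (-(Δ / 3))) ≤ βstar b k t := by
      rcases ht with h | h
      · rw [h]
        exact min_le_left _ _
      · rw [h]
        exact min_le_right _ _
    rw [hE]
    calc (⨅ k : Fin K, ((T k).card : ℝ)) *
          (⨅ bk : Fin K × Fin K,
            min (βstar bk.1 bk.2 (Δ / 3)) (βstar bk.1 bk.2 (-(Δ / 3))))
        ≤ ((T k).card : ℝ) *
          (⨅ bk : Fin K × Fin K,
            min (βstar bk.1 bk.2 (Δ / 3)) (βstar bk.1 bk.2 (-(Δ / 3)))) :=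
          mul_le_mul_of_nonneg_right hm0 hc0n
      _ ≤ ((T k).card : ℝ) * βstar b k t :=
          mul_le_mul_of_nonneg_left (hc0.trans hmin) (hnk_pos k).le
  -- bad events
  set bad : Fin K × Fin K → Set Ω :=
    fun p => {ω | ((T p.2).card : ℝ) * (Δ / 3) ≤ |(∑ i ∈ T p.2, Z p.1 p.2 i) ω|} with hbad
  have hS_meas : ∀ b k, Measurable (∑ i ∈ T k, Z b k i) := by
    intro b k
    have h1 : Measurable fun ω => ∑ i ∈ T k, Z b k i ω :=
      Finset.measurable_sum _ (fun i _ => hZ_meas b k i)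
    have h2 : (∑ i ∈ T k, Z b k i) = fun ω => ∑ i ∈ T k, Z b k i ω := by
      funext ω
      simp [Finset.sum_apply]
    rw [h2]
    exact h1
  have hbad_meas : ∀ p, MeasurableSet (bad p) := by
    intro p
    rw [hbad]
    exact measurableSet_le measurable_const (hS_meas p.1 p.2).abs
  have hbad_bound : ∀ p, (P (bad p)).toReal ≤ 2 * Real.exp (-E) := by
    rintro ⟨b, k⟩
    have hsub : bad (b, k) ⊆
        {ω | ((T k).card : ℝ) * (Δ / 3) ≤ (∑ i ∈ T k, Z b k i) ω}
        ∪ {ω | (∑ i ∈ T k, Z b k i) ω ≤ ((T k).card : ℝ) * (-(Δ / 3))} := by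
      intro ω hω
      simp only [hbad, Set.mem_setOf_eq] at hω
      rcases le_abs.mp hω with h | h
      · exact Or.inl h
      · right
        simp only [Set.mem_setOf_eq]
        linarith
    have h1 : P (bad (b, k)) ≤
        P {ω | ((T k).card : ℝ) * (Δ / 3) ≤ (∑ i ∈ T k, Z b k i) ω}
        + P {ω | (∑ i ∈ T k, Z b k i) ω ≤ ((T k).card : ℝ) * (-(Δ / 3))} :=
      (measure_mono hsub).trans (measure_union_le _ _)
    have h2 : (P (bad (b, k))).toReal ≤
        (P {ω | ((T k).card : ℝ) * (Δ / 3) ≤ (∑ i ∈ T k, Z b k i) ω}).toReal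
        + (P {ω | (∑ i ∈ T k, Z b k i) ω ≤ ((T k).card : ℝ) * (-(Δ / 3))}).toReal := by
      have h3 := ENNReal.toReal_mono
        (ENNReal.add_ne_top.mpr ⟨measure_ne_top P _, measure_ne_top P _⟩) h1
      rwa [ENNReal.toReal_add (measure_ne_top P _) (measure_ne_top P _)] at h3
    have hA := chern_up b k (Δ / 3) (by linarith)
    have hB := chern_lo b k (-(Δ / 3)) (by linarith)
    have hEA := hE_le b k (Δ / 3) (Or.inl rfl)
    have hEB := hE_le b k (-(Δ / 3)) (Or.inr rfl)
    have hA' : (P {ω | ((T k).card : ℝ) * (Δ / 3) ≤ (∑ i ∈ T k, Z b k i) ω}).toReal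
        ≤ Real.exp (-E) := hA.trans (Real.exp_le_exp.mpr (by linarith))
    have hB' : (P {ω | (∑ i ∈ T k, Z b k i) ω ≤ ((T k).card : ℝ) * (-(Δ / 3))}).toReal
        ≤ Real.exp (-E) := hB.trans (Real.exp_le_exp.mpr (by linarith))
    linarith
  -- deterministic part
  have hsubset : (⋃ p, bad p)ᶜ ⊆ {ω | ∀ π : Equiv.Perm (Fin K), π ≠ 1 →
      (1 / (n : ℝ)) * ∑ i, Real.log (lam (π (y i)) * f (π (y i)) (X i ω))
        < (1 / (n : ℝ)) * ∑ i, Real.log (lam (y i) * f (y i) (X i ω))} := by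
    intro ω hω
    simp only [Set.mem_compl_iff, Set.mem_iUnion, not_exists] at hω
    have hless : ∀ b k, |∑ i ∈ T k, Z b k i ω| < ((T k).card : ℝ) * (Δ / 3) := by
      intro b k
      have h5 := hω (b, k)
      simp only [hbad, Set.mem_setOf_eq, not_le, Finset.sum_apply] at h5
      exact h5
    simp only [Set.mem_setOf_eq]
    intro π hπ
    have hdecomp : ∀ σ : Equiv.Perm (Fin K),
        ∑ i, Real.log (lam (σ (y i)) * f (σ (y i)) (X i ω))
          = (∑ k, ∑ i ∈ T k, Z (σ k) k i ω) + ∑ i, μmat (σ (y i)) (y i) := by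
      intro σ
      simp only [hT]
      rw [← Finset.sum_fiberwise Finset.univ y
        (fun i => Real.log (lam (σ (y i)) * f (σ (y i)) (X i ω)))]
      rw [← Finset.sum_fiberwise Finset.univ y (fun i => μmat (σ (y i)) (y i))]
      rw [← Finset.sum_add_distrib]
      refine Finset.sum_congr rfl fun k _ => ?_
      rw [← Finset.sum_add_distrib]
      refine Finset.sum_congr rfl fun i hi => ?_
      have hik : y i = k := (Finset.mem_filter.mp hi).2
      simp only [hZ, hg, hik]
      ring
    have hsum_mu : ∀ σ : Equiv.Perm (Fin K),
        ∑ i, μmat (σ (y i)) (y i) = (n : ℝ) * M σ := by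
      intro σ
      rw [hM σ]
      field_simp
    have habs : ∀ σ : Equiv.Perm (Fin K),
        |∑ k, ∑ i ∈ T k, Z (σ k) k i ω| < (n : ℝ) * (Δ / 3) := by
      intro σ
      calc |∑ k, ∑ i ∈ T k, Z (σ k) k i ω| ≤ ∑ k, |∑ i ∈ T k, Z (σ k) k i ω| :=
            Finset.abs_sum_le_sum_abs _ _
        _ < ∑ k, ((T k).card : ℝ) * (Δ / 3) := by
            apply Finset.sum_lt_sum_of_nonempty Finset.univ_nonempty
            intro k _
            exact hless (σ k) k
        _ = (n : ℝ) * (Δ / 3) := by rw [← Finset.sum_mul, hn_sum]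
    have hMle : M π ≤ M 1 - Δ := by
      have hb : BddAbove (Set.range fun σ : {σ : Equiv.Perm (Fin K) // σ ≠ 1} => M σ.1) :=
        Set.Finite.bddAbove (Set.finite_range _)
      have h6 := le_ciSup hb (⟨π, hπ⟩ : {σ : Equiv.Perm (Fin K) // σ ≠ 1})
      simp only at h6
      linarith [h6]
    have h1 := hdecomp π
    have h2 := hdecomp 1
    have hA := habs π
    have hB := habs 1
    have hMuπ := hsum_mu π
    have hMu1 := hsum_mu 1
    simp only [Equiv.Perm.one_apply] at h2 hB hMu1
    rw [h1, h2, hMuπ, hMu1]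
    apply (mul_lt_mul_iff_right₀ (by positivity : (0 : ℝ) < 1 / (n : ℝ))).mpr
    have hA' := abs_lt.mp hA
    have hB' := abs_lt.mp hB
    have h7 : (n : ℝ) * M π ≤ (n : ℝ) * (M 1 - Δ) :=
      mul_le_mul_of_nonneg_left hMle hn_pos.le
    have h8 : (n : ℝ) * (M 1 - Δ) = (n : ℝ) * M 1 - (n : ℝ) * Δ := by ring
    have h9 : (n : ℝ) * Δ = 3 * ((n : ℝ) * (Δ / 3)) := by ring
    have h10 : 0 < (n : ℝ) * (Δ / 3) := by positivity
    rw [h8] at h7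
    linarith [hA'.2, hB'.1]
  -- assembly
  have hUnion_meas : MeasurableSet (⋃ p, bad p) := MeasurableSet.iUnion hbad_meas
  have hPU : (P (⋃ p, bad p)).toReal ≤ 2 * (K : ℝ) ^ 2 * Real.exp (-E) := by
    have h1 : P (⋃ p, bad p) ≤ ∑ p : Fin K × Fin K, P (bad p) :=
      (measure_iUnion_le _).trans_eq (tsum_fintype _)
    have h2 : (P (⋃ p, bad p)).toReal ≤ ∑ p : Fin K × Fin K, (P (bad p)).toReal := by
      have h3 := ENNReal.toReal_mono
        (ENNReal.sum_ne_top.mpr fun p _ => measure_ne_top P _) h1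
      rwa [ENNReal.toReal_sum (fun p _ => measure_ne_top P _)] at h3
    refine h2.trans ?_
    calc ∑ p : Fin K × Fin K, (P (bad p)).toReal
        ≤ ∑ _p : Fin K × Fin K, 2 * Real.exp (-E) :=
          Finset.sum_le_sum fun p _ => hbad_bound p
      _ = 2 * (K : ℝ) ^ 2 * Real.exp (-E) := by
          rw [Finset.sum_const, Finset.card_univ]
          simp only [Fintype.card_prod, Fintype.card_fin, nsmul_eq_mul]
          push_cast
          ring
  have hEgoal : (⨅ k : Fin K, ((Finset.univ.filter (fun i => y i = k)).card : ℝ)) *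
      (⨅ bk : Fin K × Fin K,
        min (βstar bk.1 bk.2 (Δ / 3)) (βstar bk.1 bk.2 (-(Δ / 3)))) = E := by
    rw [hE]
  have hfinal : 1 - 2 * (K : ℝ) ^ 2 * Real.exp (-E)
      ≤ (P {ω | ∀ π : Equiv.Perm (Fin K), π ≠ 1 →
          (1 / (n : ℝ)) * ∑ i, Real.log (lam (π (y i)) * f (π (y i)) (X i ω))
            < (1 / (n : ℝ)) * ∑ i, Real.log (lam (y i) * f (y i) (X i ω))}).toReal := by
    calc 1 - 2 * (K : ℝ) ^ 2 * Real.exp (-E)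
        ≤ 1 - (P (⋃ p, bad p)).toReal := by linarith
      _ = (P ((⋃ p, bad p)ᶜ)).toReal := by
          rw [measure_compl hUnion_meas (measure_ne_top _ _), measure_univ,
            ENNReal.toReal_sub_of_le prob_le_one ENNReal.one_ne_top, ENNReal.toReal_one]
      _ ≤ _ := ENNReal.toReal_mono (measure_ne_top _ _) (measure_mono hsubset)
  rw [← hEgoal] at hfinal
  exact hfinal
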